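/- Let n ≥ 2 be an integer and μ ∈ (0, 1/(1+n)]. Then the function h(θ) = √((1+n)μ) · (sin(θ/μ))^{1/(1+n)} satisfies 𝓛h(θ) ≤ n − n (sin(θ/μ))^{(2−2n)/(1+n)} ≤ 0 for all θ ∈ (0, μπ). -/

import Mathlib

open scoped BigOperators
open Real

private lemma sinRpowDeriv (μ p t : ℝ) (hμ : μ ≠ 0) (hs : Real.sin (t / μ) ≠ 0) :
    HasDerivAt (fun t => Real.sin (t / μ) ^ p)
      (p * Real.sin (t / μ) ^ (p - 1) * (Real.cos (t / μ) * (1 / μ))) t := by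
  have h1 : HasDerivAt (fun t : ℝ => t / μ) (1 / μ) t := by
    simpa using (hasDerivAt_id t).div_const μ
  have h2 : HasDerivAt Real.sin (Real.cos (t / μ)) (t / μ) := Real.hasDerivAt_sin _
  have h3 : HasDerivAt (fun x : ℝ => x ^ p)
      (p * Real.sin (t / μ) ^ (p - 1)) (Real.sin (t / μ)) :=
    Real.hasDerivAt_rpow_const (Or.inl hs)
  have := h3.comp t (h2.comp t h1)
  simpa [Function.comp_def] using this

private lemma cosDeriv (μ t : ℝ) :
    HasDerivAt (fun t => Real.cos (t / μ)) (-Real.sin (t / μ) * (1 / μ)) t := by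
  have h1 : HasDerivAt (fun t : ℝ => t / μ) (1 / μ) t := by
    simpa using (hasDerivAt_id t).div_const μ
  simpa [Function.comp_def] using (Real.hasDerivAt_cos (t / μ)).comp t h1

/-- For `n ≥ 2` and `μ ∈ (0, 1/(1+n)]`, the function
`h(θ) = √((1+n)μ) (sin(θ/μ))^{1/(1+n)}` satisfies
`𝓛h(θ) ≤ n − n (sin(θ/μ))^{(2−2n)/(1+n)} ≤ 0` on `(0, μπ)`, where
`𝓛h = h(1+h²)(h''+h) + n(1+h²+(h')²)`. -/
theorem stmt3 (n : ℕ) (hn : 2 ≤ n) (μ : ℝ) (hμ0 : 0 < μ) (hμ1 : μ ≤ 1 / (1 + (n : ℝ))) :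
    ∀ h : ℝ → ℝ,
      (h = fun θ =>
        Real.sqrt ((1 + (n : ℝ)) * μ) * Real.sin (θ / μ) ^ (1 / (1 + (n : ℝ)))) →
      ∀ θ ∈ Set.Ioo 0 (μ * Real.pi),
        h θ * (1 + h θ ^ 2) * (deriv (deriv h) θ + h θ)
            + (n : ℝ) * (1 + h θ ^ 2 + (deriv h θ) ^ 2)
          ≤ (n : ℝ) - (n : ℝ) * Real.sin (θ / μ) ^ ((2 - 2 * (n : ℝ)) / (1 + (n : ℝ))) ∧
        (n : ℝ) - (n : ℝ) * Real.sin (θ / μ) ^ ((2 - 2 * (n : ℝ)) / (1 + (n : ℝ))) ≤ 0 := by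
  intro h hh θ hθ
  have hn2 : (2 : ℝ) ≤ (n : ℝ) := by exact_mod_cast hn
  set k : ℝ := 1 + (n : ℝ) with hk
  have hkpos : 0 < k := by positivity
  have hkne : k ≠ 0 := ne_of_gt hkpos
  have hμne : μ ≠ 0 := ne_of_gt hμ0
  set a : ℝ := 1 / k with ha
  set c : ℝ := Real.sqrt (k * μ) with hc
  have hc2 : c ^ 2 = k * μ := Real.sq_sqrt (by positivity)
  -- sin positivity on the interval
  have hsinpos : ∀ t ∈ Set.Ioo 0 (μ * Real.pi), 0 < Real.sin (t / μ) := by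
    intro t ht
    apply Real.sin_pos_of_pos_of_lt_pi
    · exact div_pos ht.1 hμ0
    · rw [div_lt_iff₀ hμ0]
      linarith [ht.2]
  set s : ℝ := Real.sin (θ / μ) with hsdef
  set cc : ℝ := Real.cos (θ / μ) with hccdef
  have hs0 : 0 < s := hsinpos θ hθ
  have hs1 : s ≤ 1 := Real.sin_le_one _
  have hcc2 : cc ^ 2 = 1 - s ^ 2 := Real.cos_sq' _
  set u : ℝ := s ^ a with hu
  have hupos : 0 < u := Real.rpow_pos_of_pos hs0 a
  -- first derivative
  have hF : ∀ t ∈ Set.Ioo 0 (μ * Real.pi),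
      HasDerivAt h (c * (a * Real.sin (t / μ) ^ (a - 1) * (Real.cos (t / μ) * (1 / μ)))) t := by
    intro t ht
    rw [hh]
    exact (sinRpowDeriv μ a t hμne (ne_of_gt (hsinpos t ht))).const_mul c
  set F : ℝ → ℝ :=
    fun t => c * (a * Real.sin (t / μ) ^ (a - 1) * (Real.cos (t / μ) * (1 / μ))) with hFdef
  have hderiv : ∀ t ∈ Set.Ioo 0 (μ * Real.pi), deriv h t = F t := by
    intro t ht
    exact (hF t ht).deriv
  have e1 : deriv h θ = c * (a * s ^ (a - 1) * (cc * (1 / μ))) := hderiv θ hθ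
  -- second derivative
  have hA : HasDerivAt (fun t => Real.sin (t / μ) ^ (a - 1))
      ((a - 1) * s ^ (a - 1 - 1) * (cc * (1 / μ))) θ :=
    sinRpowDeriv μ (a - 1) θ hμne (ne_of_gt hs0)
  have hB : HasDerivAt (fun t => Real.cos (t / μ) * (1 / μ)) (-s * (1 / μ) * (1 / μ)) θ :=
    (cosDeriv μ θ).mul_const (1 / μ)
  have hF' : HasDerivAt F
      (c * (a * ((a - 1) * s ^ (a - 1 - 1) * (cc * (1 / μ)) * (cc * (1 / μ))
        + s ^ (a - 1) * (-s * (1 / μ) * (1 / μ))))) θ := by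
    have h0 := ((hA.mul hB).const_mul a).const_mul c
    have hFeq : (fun t => c * (a * (Real.sin (t / μ) ^ (a - 1) * (Real.cos (t / μ) * (1 / μ)))))
        = F := by
      funext t
      rw [hFdef]
      ring
    rw [← hFeq]
    exact h0
  have e2 : deriv (deriv h) θ
      = c * (a * ((a - 1) * s ^ (a - 1 - 1) * (cc * (1 / μ)) * (cc * (1 / μ))
        + s ^ (a - 1) * (-s * (1 / μ) * (1 / μ)))) := by
    have heq : deriv h =ᶠ[nhds θ] F :=
      Filter.eventuallyEq_of_mem (isOpen_Ioo.mem_nhds hθ) hderiv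
    rw [heq.deriv_eq]
    exact hF'.deriv
  have e0 : h θ = c * u := by rw [hh]
  -- rpow rewriting
  have hu1 : s ^ (a - 1) = u / s := by
    rw [hu, Real.rpow_sub hs0, Real.rpow_one]
  have hu2 : s ^ (a - 1 - 1) = u / s ^ 2 := by
    rw [Real.rpow_sub hs0, hu1, Real.rpow_one, div_div, sq]
  have hrw : s ^ ((2 - 2 * (n : ℝ)) / (1 + (n : ℝ))) = u ^ 4 / s ^ 2 := by
    have hexp : (2 - 2 * (n : ℝ)) / (1 + (n : ℝ)) = a * 4 - 2 := by
      rw [ha, hk]; field_simp; ring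
    rw [hexp, Real.rpow_sub hs0, Real.rpow_mul hs0.le, hu]
    rw [show (4 : ℝ) = ((4 : ℕ) : ℝ) by norm_num, Real.rpow_natCast]
    rw [show (2 : ℝ) = ((2 : ℕ) : ℝ) by norm_num, Real.rpow_natCast]
  -- second inequality
  have hsecond : (n : ℝ) - (n : ℝ) * s ^ ((2 - 2 * (n : ℝ)) / (1 + (n : ℝ))) ≤ 0 := by
    have hexp0 : (2 - 2 * (n : ℝ)) / (1 + (n : ℝ)) ≤ 0 := by
      apply div_nonpos_of_nonpos_of_nonneg <;> linarith
    have h1 : (1 : ℝ) ≤ s ^ ((2 - 2 * (n : ℝ)) / (1 + (n : ℝ))) :=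
      Real.one_le_rpow_of_pos_of_le_one_of_nonpos hs0 hs1 hexp0
    nlinarith
  refine ⟨?_, hsecond⟩
  rw [e0, e1, e2, hu1, hu2, hrw]
  -- eliminate c
  have expand : c * u * (1 + (c * u) ^ 2)
        * (c * (a * ((a - 1) * (u / s ^ 2) * (cc * (1 / μ)) * (cc * (1 / μ))
            + u / s * (-s * (1 / μ) * (1 / μ)))) + c * u)
      + (n : ℝ) * (1 + (c * u) ^ 2 + (c * (a * (u / s) * (cc * (1 / μ)))) ^ 2)
      = (c ^ 2 * (u * (a * ((a - 1) * (u / s ^ 2) * (cc * (1 / μ)) * (cc * (1 / μ))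
            + u / s * (-s * (1 / μ) * (1 / μ))) + u))) * (1 + c ^ 2 * u ^ 2)
        + (n : ℝ) * (1 + c ^ 2 * u ^ 2 + c ^ 2 * (a * (u / s) * (cc * (1 / μ))) ^ 2) := by
    ring
  rw [expand, hc2]
  have hcc2' : (a - 1) * (u / s ^ 2) * (cc * (1 / μ)) * (cc * (1 / μ))
      = (a - 1) * (u / s ^ 2) * ((1 - s ^ 2) * (1 / μ ^ 2)) := by
    rw [← hcc2]; ring
  have hcc3 : (a * (u / s) * (cc * (1 / μ))) ^ 2
      = a ^ 2 * u ^ 2 * (1 - s ^ 2) / (s ^ 2 * μ ^ 2) := by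
    rw [← hcc2]; ring
  rw [hcc2', hcc3]
  -- now c-free, cc-free goal
  have main : k * μ * (u * (a * ((a - 1) * (u / s ^ 2) * ((1 - s ^ 2) * (1 / μ ^ 2))
            + u / s * (-s * (1 / μ) * (1 / μ))) + u)) * (1 + k * μ * u ^ 2)
        + (n : ℝ) * (1 + k * μ * u ^ 2 + k * μ * (a ^ 2 * u ^ 2 * (1 - s ^ 2) / (s ^ 2 * μ ^ 2)))
      = (n : ℝ) - (n : ℝ) * (u ^ 4 / s ^ 2)
        + u ^ 2 * (k ^ 2 * μ ^ 2 - 1) * (1 / μ + u ^ 2) := by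
    rw [ha, hk]
    field_simp
    ring
  rw [main]
  clear main expand hsecond hrw hu1 hu2 e0 e2 hF' hB hA e1 hderiv hF hh hcc2' hcc3
  clear_value k a c s cc u F
  clear hFdef hc hc2 hccdef hcc2 F c cc
  have hR : u ^ 2 * (k ^ 2 * μ ^ 2 - 1) * (1 / μ + u ^ 2) ≤ 0 := by
    have hkμ : k * μ ≤ 1 := by
      rw [ha, le_div_iff₀ hkpos] at hμ1
      calc k * μ = μ * k := mul_comm k μ
        _ ≤ 1 := hμ1
    have hkμ0 : 0 ≤ k * μ := le_of_lt (mul_pos hkpos hμ0)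
    have h1 : k ^ 2 * μ ^ 2 - 1 ≤ 0 := by nlinarith [mul_le_one₀ hkμ hkμ0 hkμ]
    have h2 : 0 ≤ 1 / μ + u ^ 2 := by positivity
    exact mul_nonpos_of_nonpos_of_nonneg
      (mul_nonpos_of_nonneg_of_nonpos (sq_nonneg u) h1) h2
  linarith
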